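/- Let G be an acyclic transitive digraph on a finite vertex set V and let S be a subgraph of G such that ucl(S) is a permutation graph. Then tcl(S) is a subgraph of G and ucl(tcl(S)) is a permutation graph. -/

import Mathlib

/-- Undirected closure of a digraph: `E ∪ E⁻¹`. -/
def ucl {V : Type*} (E : V → V → Prop) : V → V → Prop := fun a b => E a b ∨ E b a

/-- Complement of a digraph: all pairs of distinct vertices not in `ucl E`. -/
def cmpl {V : Type*} (E : V → V → Prop) : V → V → Prop := fun a b => a ≠ b ∧ ¬ ucl E a b

/-- A digraph is oriented iff `E ∩ E⁻¹ = ∅`. -/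
def Oriented {V : Type*} (E : V → V → Prop) : Prop := ∀ a b, E a b → ¬ E b a

/-- `O` is an orientation of `E`: a maximal oriented subset of `E`. -/
def IsOrientation {V : Type*} (O E : V → V → Prop) : Prop :=
  (∀ a b, O a b → E a b) ∧ Oriented O ∧
    ∀ O' : V → V → Prop, (∀ a b, O' a b → E a b) → Oriented O' →
      (∀ a b, O a b → O' a b) → ∀ a b, O' a b → O a b

/-- Transitivity of a digraph: `(a,b) ∈ E`, `(b,c) ∈ E` and `a ≠ c` imply `(a,c) ∈ E`. -/
def TransD {V : Type*} (E : V → V → Prop) : Prop :=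
  ∀ a b c, E a b → E b c → a ≠ c → E a c

/-- Transitive closure of a digraph. -/
def tcl {V : Type*} (E : V → V → Prop) : V → V → Prop := Relation.TransGen E

/-- A digraph is acyclic iff its transitive closure is irreflexive. -/
def Acyclic {V : Type*} (E : V → V → Prop) : Prop := Irreflexive (tcl E)

/-- A transitive orientation of `E` is an orientation of `E` that is transitive. -/
def IsTransOrientation {V : Type*} (O E : V → V → Prop) : Prop :=
  IsOrientation O E ∧ TransD O

/-- `E` is transitively orientable iff it has a transitive orientation. -/
def TransOrientable {V : Type*} (E : V → V → Prop) : Prop := ∃ O, IsTransOrientation O E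

/-- `L` is a strict linear order on the vertex set. -/
def IsStrictLinear {V : Type*} (L : V → V → Prop) : Prop :=
  Irreflexive L ∧ Transitive L ∧ ∀ a b : V, a ≠ b → L a b ∨ L b a

/-- `E` is 2-dimensional: the intersection of two strict linear orders. -/
def TwoDim {V : Type*} (E : V → V → Prop) : Prop :=
  ∃ L₁ L₂ : V → V → Prop, IsStrictLinear L₁ ∧ IsStrictLinear L₂ ∧
    ∀ a b, E a b ↔ L₁ a b ∧ L₂ a b

/-- Direct forcing `Γ` between edges of an undirected graph `E`:
`(a,b) Γ (c,d)` iff both are edges of `E` and either `a = c` with `b, d` non-adjacent,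
or `b = d` with `a, c` non-adjacent. -/
def Forces {V : Type*} (E : V → V → Prop) (e f : V × V) : Prop :=
  E e.1 e.2 ∧ E f.1 f.2 ∧
    ((e.1 = f.1 ∧ e.2 ≠ f.2 ∧ ¬ E e.2 f.2) ∨ (e.2 = f.2 ∧ e.1 ≠ f.1 ∧ ¬ E e.1 f.1))

/-- `S` is a 2-dimensional subgraph of `G`: a subgraph that is a 2-dimensional
acyclic transitive digraph. -/
def TwoDimSubgraph {V : Type*} (G S : V → V → Prop) : Prop :=
  (∀ a b, S a b → G a b) ∧ Irreflexive S ∧ TransD S ∧ Acyclic S ∧ TwoDim S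

/-- A permutation graph: an undirected graph such that both it and its complement
are transitively orientable. -/
def PermGraph {V : Type*} (E : V → V → Prop) : Prop :=
  Irreflexive E ∧ (∀ a b, E a b → E b a) ∧ TransOrientable E ∧ TransOrientable (cmpl E)

/-- `S` is a permutation subgraph of `G`: an undirected subgraph of `G` that is a
permutation graph. -/
def PermSubgraph {V : Type*} (G S : V → V → Prop) : Prop :=
  (∀ a b, S a b → G a b) ∧ PermGraph S

section KeyLemma
variable {V : Type*}

lemma ucl_inl {E : V → V → Prop} {a b : V} (h : E a b) : ucl E a b := Or.inl h
lemma ucl_inr {E : V → V → Prop} {a b : V} (h : E b a) : ucl E a b := Or.inr h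
lemma ucl_symm {E : V → V → Prop} {a b : V} (h : ucl E a b) : ucl E b a := h.symm
lemma ucl_cases {E : V → V → Prop} {a b : V} (h : ucl E a b) : E a b ∨ E b a := h
lemma ucl_ucl {E : V → V → Prop} {a b : V} : ucl (ucl E) a b ↔ ucl E a b :=
  ⟨fun h => (ucl_cases h).elim id ucl_symm, ucl_inl⟩
lemma uclS_tcl {E : V → V → Prop} {a b : V} (h : ucl E a b) : ucl (tcl E) a b :=
  (ucl_cases h).elim (fun h => ucl_inl (Relation.TransGen.single h))
    (fun h => ucl_inr (Relation.TransGen.single h))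

lemma key_lemma {S F2 : V → V → Prop}
    (h2sub : ∀ x y, F2 x y → cmpl (ucl S) x y)
    (h2or : Oriented F2) (h2tr : TransD F2)
    (htot : ∀ x y, cmpl (ucl S) x y → F2 x y ∨ F2 y x)
    {a b c : V} (hac : Relation.TransGen S a c)
    (hab : F2 a b) (hbc : F2 b c)
    (iab : ¬ ucl (tcl S) a b) (ibc : ¬ ucl (tcl S) b c) : False := by
  have H : ∀ x, Relation.TransGen S x c → Relation.ReflTransGen S a x → F2 x b → False := by
    intro x hxc
    induction hxc using Relation.TransGen.head_induction_on with
    | single h =>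
      rename_i x'
      intro hax hxb
      have hne : x' ≠ c := by
        rintro rfl; exact h2or _ _ hxb hbc
      have hxc2 : F2 x' c := h2tr _ _ _ hxb hbc hne
      exact (h2sub _ _ hxc2).2 (ucl_ucl.mpr (ucl_inl h))
    | head hxy hyc IH =>
      rename_i x' y
      intro hax hxb
      have hay : Relation.ReflTransGen S a y := hax.tail hxy
      -- show F2 y b
      have hiyb : ¬ ucl (tcl S) y b := by
        intro huu
        rcases ucl_cases huu with h | h
        · -- tcl S y b → tcl S a b
          rcases Relation.reflTransGen_iff_eq_or_transGen.mp hax with rfl | hax'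
          · exact iab (ucl_inl (Relation.TransGen.head hxy h))
          · exact iab (ucl_inl ((hax'.tail hxy).trans h))
        · exact ibc (ucl_inl (h.trans hyc))
      have hyb : y ≠ b := by
        rintro rfl; exact ibc (ucl_inl hyc)
      have hcm : cmpl (ucl S) y b := by
        exact ⟨hyb, fun h => hiyb (uclS_tcl (ucl_ucl.mp h))⟩
      rcases htot _ _ hcm with h | h
      · exact IH hay h
      · have hne : x' ≠ y := by
          rintro rfl; exact h2or _ _ hxb h
        have : F2 x' y := h2tr _ _ _ hxb h hne
        exact (h2sub _ _ this).2 (ucl_ucl.mpr (ucl_inl hxy))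
  exact H a hac Relation.ReflTransGen.refl hab

end KeyLemma

theorem tcl_of_permutation_subgraph
    {V : Type*} [Fintype V] (G S : V → V → Prop)
    (hirr : Irreflexive G) (hacyc : Acyclic G) (htrans : TransD G)
    (hsub : ∀ a b, S a b → G a b)
    (hperm : PermGraph (ucl S)) :
    (∀ a b, tcl S a b → G a b) ∧ PermGraph (ucl (tcl S)) := by
  obtain ⟨hirrS, hsymS, hto, hcto⟩ := hperm
  -- tcl S ⊆ tcl G
  have htclG : ∀ a b, tcl S a b → Relation.TransGen G a b :=
    fun a b h => Relation.TransGen.mono hsub _ _ h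
  have hGtcl : ∀ a b, Relation.TransGen G a b → G a b := by
    intro a b h
    induction h with
    | single h => exact h
    | tail h₁ h₂ ih =>
      refine htrans _ _ _ ih h₂ ?_
      rintro rfl
      exact hacyc _ (h₁.tail h₂)
  have hmain : ∀ a b, tcl S a b → G a b := fun a b h => hGtcl _ _ (htclG _ _ h)
  have htacyc : ∀ a, ¬ tcl S a a := fun a h => hacyc a (htclG _ _ h)
  have htor : Oriented (tcl S) := fun a b h h' => htacyc a (h.trans h')
  refine ⟨hmain, ?_, ?_, ?_, ?_⟩
  · intro a h
    rcases ucl_cases h with h | h <;> exact htacyc a h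
  · intro a b h; exact ucl_symm h
  · -- tcl S transitively orients ucl (tcl S)
    refine ⟨tcl S, ⟨⟨fun a b h => ucl_inl h, htor, ?_⟩, fun a b c h h' _ => h.trans h'⟩⟩
    intro O' hO's hO'or hO'le a b h
    rcases ucl_cases (hO's a b h) with h' | h'
    · exact h'
    · exact absurd (hO'le _ _ h') (fun hh => hO'or _ _ h hh)
  · -- complement
    obtain ⟨F2, ⟨⟨h2sub, h2or, h2max⟩, h2tr⟩⟩ := hcto
    have htot : ∀ x y, cmpl (ucl S) x y → F2 x y ∨ F2 y x := by
      intro x y hxy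
      by_contra hcon
      push_neg at hcon
      have hsub' : ∀ u v, (fun u v => F2 u v ∨ (u = x ∧ v = y)) u v → cmpl (ucl S) u v := by
        rintro u v (h | ⟨rfl, rfl⟩)
        · exact h2sub _ _ h
        · exact hxy
      have hor' : Oriented (fun u v => F2 u v ∨ (u = x ∧ v = y)) := by
        rintro u v (h | ⟨rfl, rfl⟩) (h' | ⟨hu, hv⟩)
        · exact h2or _ _ h h'
        · exact hcon.2 (hv ▸ hu ▸ h)
        · exact hcon.2 h'
        · exact hxy.1 hu.symm
      have := h2max _ hsub' hor' (fun u v h => Or.inl h) x y (Or.inr ⟨rfl, rfl⟩)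
      exact hcon.1 this
    -- restricted orientation
    set F : V → V → Prop := fun u v => F2 u v ∧ ¬ ucl (tcl S) u v with hF
    have hFsub : ∀ a b, F a b → cmpl (ucl (tcl S)) a b :=
      fun a b h => ⟨(h2sub _ _ h.1).1, fun hh => h.2 (ucl_ucl.mp hh)⟩
    have hFor : Oriented F := fun a b h h' => h2or _ _ h.1 h'.1
    have hFtot : ∀ a b, cmpl (ucl (tcl S)) a b → F a b ∨ F b a := by
      intro a b hab
      have hcm : cmpl (ucl S) a b :=
        ⟨hab.1, fun h => hab.2 (ucl_ucl.mpr (uclS_tcl (ucl_ucl.mp h)))⟩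
      have hnab : ¬ ucl (tcl S) a b := fun h => hab.2 (ucl_ucl.mpr h)
      have hba : ¬ ucl (tcl S) b a := fun h => hnab (ucl_symm h)
      rcases htot _ _ hcm with h | h
      · exact Or.inl ⟨h, hnab⟩
      · exact Or.inr ⟨h, hba⟩
    refine ⟨F, ⟨⟨hFsub, hFor, ?_⟩, ?_⟩⟩
    · intro O' hO's hO'or hO'le a b h
      rcases hFtot a b (hO's a b h) with h' | h'
      · exact h'
      · exact absurd (hO'le _ _ h') (fun hh => hO'or _ _ h hh)
    · -- transitivity of F
      rintro a b c ⟨hab, iab⟩ ⟨hbc, ibc⟩ hac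
      have hF2ac : F2 a c := h2tr _ _ _ hab hbc hac
      refine ⟨hF2ac, ?_⟩
      rintro (h | h)
      · exact key_lemma h2sub h2or h2tr htot h hab hbc iab ibc
      · -- tcl S c a : apply key with flipped F2
        have h2sub' : ∀ x y, (flip F2) x y → cmpl (ucl S) x y := by
          intro x y h'
          obtain ⟨hne, hn⟩ := h2sub _ _ h'
          exact ⟨hne.symm, fun hh => hn (ucl_symm hh)⟩
        have h2or' : Oriented (flip F2) := fun x y h h' => h2or _ _ h' h
        have h2tr' : TransD (flip F2) := fun x y z h h' hne =>
          h2tr _ _ _ h' h (fun e => hne e.symm)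
        have htot' : ∀ x y, cmpl (ucl S) x y → (flip F2) x y ∨ (flip F2) y x := by
          intro x y hxy
          rcases htot y x ⟨hxy.1.symm, fun hh => hxy.2 (ucl_symm hh)⟩ with h' | h'
          · exact Or.inl h'
          · exact Or.inr h'
        exact key_lemma h2sub' h2or' h2tr' htot' h (show flip F2 c b from hbc)
          (show flip F2 b a from hab) (fun hh => ibc (ucl_symm hh)) (fun hh => iab (ucl_symm hh))
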